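/- Sufficient criterion for variational source conditions: Let T : X → Y be bounded linear between Hilbert spaces, f† ∈ X, and for ε in an index set ℐ ⊂ (0,∞) let P_ε be orthogonal projections onto subspaces V_ε with ‖(I − P_ε)f†‖ ≤ κ_ε, inf_ε κ_ε = 0, and ⟨P_ε f†, f† − f⟩ ≤ σ_ε ‖Tf† − Tf‖ for all f ∈ X. Then f† satisfies (1/4)‖f − f†‖² ≤ (1/2)‖f‖² − (1/2)‖f†‖² + ψ(‖Tf − Tf†‖²) for all f ∈ X, with ψ(t) = inf_{ε∈ℐ} [σ_ε √t + κ_ε²]. -/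

import Mathlib

open scoped InnerProductSpace

/-- Sufficient criterion for variational source conditions via a family of
orthogonal projections P_ε (self-adjoint idempotents), approximation numbers κ_ε with
inf κ_ε = 0, and ⟨P_ε f†, f† − f⟩ ≤ σ_ε ‖Tf† − Tf‖. Then the VSC holds with
ψ(t) = inf_ε [σ_ε √t + κ_ε²]. -/
theorem vsc_sufficient_criterion
    {X Y : Type*} [NormedAddCommGroup X] [InnerProductSpace ℂ X] [CompleteSpace X]
    [NormedAddCommGroup Y] [InnerProductSpace ℂ Y] [CompleteSpace Y]
    (T : X →L[ℂ] Y) (fdag : X)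
    (I : Set ℝ) (hI : I ⊆ Set.Ioi 0) (hIne : I.Nonempty)
    (P : ℝ → X →L[ℂ] X)
    (hproj : ∀ ε ∈ I, (∀ x : X, P ε (P ε x) = P ε x) ∧
      (∀ x y : X, ⟪P ε x, y⟫_ℂ = ⟪x, P ε y⟫_ℂ))
    (κ σ : ℝ → ℝ)
    (hκpos : ∀ ε ∈ I, 0 < κ ε) (hσpos : ∀ ε ∈ I, 0 < σ ε)
    (happrox : ∀ ε ∈ I, ‖fdag - P ε fdag‖ ≤ κ ε)
    (hinf : ∀ η > 0, ∃ ε ∈ I, κ ε < η)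
    (hsc : ∀ ε ∈ I, ∀ f : X,
      (⟪P ε fdag, fdag - f⟫_ℂ).re ≤ σ ε * ‖T fdag - T f‖) :
    ∀ f : X,
      (1/4) * ‖f - fdag‖^2 ≤ (1/2) * ‖f‖^2 - (1/2) * ‖fdag‖^2 +
        ⨅ ε : I, (σ ε * Real.sqrt (‖T f - T fdag‖^2) + κ ε ^ 2) := by
  intro f
  have hne : Nonempty I := hIne.to_subtype
  have hsq : Real.sqrt (‖T f - T fdag‖^2) = ‖T f - T fdag‖ :=
    Real.sqrt_sq (norm_nonneg _)
  rw [hsq]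
  rw [← sub_le_iff_le_add']
  apply le_ciInf
  rintro ⟨ε, hε⟩
  have hκ := happrox ε hε
  have hσ := hsc ε hε f
  have hsplit : (⟪fdag, fdag - f⟫_ℂ).re
      = (⟪P ε fdag, fdag - f⟫_ℂ).re + (⟪fdag - P ε fdag, fdag - f⟫_ℂ).re := by
    rw [← Complex.add_re, ← inner_add_left]
    congr 2
    abel
  have hcs : (⟪fdag - P ε fdag, fdag - f⟫_ℂ).re ≤ κ ε * ‖f - fdag‖ := by
    calc (⟪fdag - P ε fdag, fdag - f⟫_ℂ).re ≤ ‖fdag - P ε fdag‖ * ‖fdag - f‖ :=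
          re_inner_le_norm (𝕜 := ℂ) _ _
    _ ≤ κ ε * ‖f - fdag‖ := by
          rw [norm_sub_rev fdag f]
          exact mul_le_mul_of_nonneg_right hκ (norm_nonneg _)
  have hnorm : ‖f‖^2 = ‖fdag‖^2 + 2*(⟪fdag, f - fdag⟫_ℂ).re + ‖f - fdag‖^2 := by
    have h := @norm_add_sq ℂ _ _ _ _ fdag (f - fdag)
    simp only [add_sub_cancel] at h; exact h
  have hres : (⟪fdag, f - fdag⟫_ℂ).re = -(⟪fdag, fdag - f⟫_ℂ).re := by
    rw [← Complex.neg_re, ← inner_neg_right]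
    congr 2
    abel
  have hsnorm : ‖T fdag - T f‖ = ‖T f - T fdag‖ := norm_sub_rev _ _
  rw [hsnorm] at hσ
  have hTnn : (0:ℝ) ≤ ‖T f - T fdag‖ := norm_nonneg _
  nlinarith [sq_nonneg (κ ε - ‖f - fdag‖/2), norm_nonneg (f - fdag)]
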